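/- Let μ be any probability measure on ℂ and let μ^s = (1/2^b) Σ_{i=0}^{2^b−1} (rotation by e^{i·2πi/2^b})_*μ be its 2π/2^b-symmetrization (the average of the pushforwards of μ under multiplication by e^{i·2πi/2^b}, i = 0,…,2^b−1). Then μ^s is invariant under multiplication by e^{i·2π/2^b} and the input–output mutual information of the b-bit phase-quantized Gaussian channel satisfies I(μ^s) ≥ I(μ). -/

import Mathlib

open MeasureTheory Real

noncomputable section

/-- Argument of a complex number taking values in `[0, 2π)`. -/
def arg2pi (z : ℂ) : ℝ := if 0 ≤ Complex.arg z then Complex.arg z else Complex.arg z + 2 * π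



lemma arg2pi_nonneg (z : ℂ) : 0 ≤ arg2pi z := by
  unfold arg2pi; split
  · assumption
  · nlinarith [Complex.neg_pi_lt_arg z, Real.pi_pos]

lemma arg2pi_lt (z : ℂ) : arg2pi z < 2 * π := by
  unfold arg2pi; split
  · nlinarith [Complex.arg_le_pi z, Real.pi_pos]
  · linarith [Complex.arg_le_pi z, not_le.mp (by assumption : ¬ 0 ≤ Complex.arg z)]

lemma abs_mul_exp_arg2pi (z : ℂ) :
    (‖z‖ : ℂ) * Complex.exp ((arg2pi z : ℂ) * Complex.I) = z := by
  unfold arg2pi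
  split
  · exact Complex.norm_mul_exp_arg_mul_I z
  · rw [show ((((Complex.arg z + 2*π : ℝ)) : ℂ)) = (Complex.arg z : ℂ) + 2*π by push_cast; ring,
      add_mul, Complex.exp_add, Complex.exp_two_pi_mul_I, mul_one]
    exact Complex.norm_mul_exp_arg_mul_I z

lemma arg2pi_unique {s t : ℝ} (hs : 0 < s) (h0 : 0 ≤ t) (h2 : t < 2 * π) :
    arg2pi ((s : ℂ) * Complex.exp ((t : ℂ) * Complex.I)) = t := by
  by_cases ht : t ≤ π
  · have harg : Complex.arg ((s : ℂ) * Complex.exp ((t : ℂ) * Complex.I)) = t := by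
      rw [Complex.exp_mul_I]
      exact Complex.arg_mul_cos_add_sin_mul_I hs ⟨by nlinarith [Real.pi_pos], ht⟩
    unfold arg2pi; rw [harg]; simp [h0]
  · push_neg at ht
    have hper : Complex.exp ((t : ℂ) * Complex.I) = Complex.exp (((t - 2*π : ℝ) : ℂ) * Complex.I) := by
      rw [show (((t - 2*π : ℝ)) : ℂ) = (t : ℂ) - 2*π by push_cast; ring, sub_mul,
        Complex.exp_sub, Complex.exp_two_pi_mul_I, div_one]
    have harg : Complex.arg ((s : ℂ) * Complex.exp ((t : ℂ) * Complex.I)) = t - 2*π := by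
      rw [hper, Complex.exp_mul_I]
      exact Complex.arg_mul_cos_add_sin_mul_I hs ⟨by linarith, by nlinarith [Real.pi_pos]⟩
    unfold arg2pi; rw [harg]
    have : ¬ (0 ≤ t - 2*π) := by linarith
    simp only [this, if_false]; ring

lemma arg2pi_exp_mul {t : ℝ} (h0 : 0 ≤ t) (h2 : t < 2 * π) {z : ℂ} (hz : z ≠ 0) :
    arg2pi (Complex.exp ((t : ℝ) * Complex.I) * z) =
      if arg2pi z + t < 2 * π then arg2pi z + t else arg2pi z + t - 2 * π := by
  have habs : (0 : ℝ) < ‖z‖ := norm_pos_iff.mpr hz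
  have hzz := abs_mul_exp_arg2pi z
  set a := arg2pi z with ha
  have key : Complex.exp ((t : ℂ) * Complex.I) * z
      = (‖z‖ : ℂ) * Complex.exp (((a + t : ℝ) : ℂ) * Complex.I) := by
    rw [show (((a + t : ℝ)) : ℂ) = (a : ℂ) + (t : ℂ) by push_cast; ring, add_mul,
      Complex.exp_add]
    conv_lhs => rw [← hzz]
    ring
  by_cases hc : a + t < 2 * π
  · rw [if_pos hc, key]
    exact arg2pi_unique habs (by linarith [arg2pi_nonneg z]) hc
  · rw [if_neg hc]
    push_neg at hc
    have hper : Complex.exp (((a + t : ℝ) : ℂ) * Complex.I)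
        = Complex.exp (((a + t - 2*π : ℝ) : ℂ) * Complex.I) := by
      rw [show (((a + t - 2*π : ℝ)) : ℂ) = ((a+t : ℝ) : ℂ) - 2*π by push_cast; ring, sub_mul,
        Complex.exp_sub, Complex.exp_two_pi_mul_I, div_one]
    rw [key, hper]
    exact arg2pi_unique habs (by linarith) (by linarith [arg2pi_lt z])

/-- The quantization sector `R_y` of a `b`-bit phase quantizer. -/
def sector (b y : ℕ) : Set ℂ :=
  {z : ℂ | z ≠ 0 ∧ 2 * π * y / 2 ^ b ≤ arg2pi z ∧ arg2pi z < 2 * π * (y + 1) / 2 ^ b}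

/-- Transition probability `W_y^{(b)}(α, θ)` of the `b`-bit phase-quantized Gaussian channel. -/
def W (b y : ℕ) (α θ : ℝ) : ℝ :=
  ∫ z in sector b y,
    (1 / π) *
      Real.exp (-(‖z - (Real.sqrt α : ℂ) * Complex.exp ((θ : ℂ) * Complex.I)‖ ^ 2))

/-- Transition probability with integer output index, understood modulo `2^b`. -/
def Wz (b : ℕ) (y : ℤ) (α θ : ℝ) : ℝ := W b ((y % (2 ^ b : ℤ)).toNat) α θ

/-- `x ↦ -x log₂ x`, with the convention `0 log₂ 0 = 0`. -/
def nH (x : ℝ) : ℝ := -(x * Real.logb 2 x)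

/-- Conditional output entropy `H(Y | U = √α e^{iθ})`. -/
def hEnt (b : ℕ) (α θ : ℝ) : ℝ := ∑ y ∈ Finset.range (2 ^ b), nH (W b y α θ)

/-- `W_y^{(b)}(u)` for a complex channel input `u`. -/
def Wu (b y : ℕ) (u : ℂ) : ℝ := W b y (‖u‖ ^ 2) (arg2pi u)

/-- Output probability `p_y` under input distribution `μ`. -/
def outP (b : ℕ) (μ : Measure ℂ) (y : ℕ) : ℝ := ∫ u, Wu b y u ∂μ

/-- Mutual information of the `b`-bit phase-quantized Gaussian channel with input law `μ`. -/
def mutInfo (b : ℕ) (μ : Measure ℂ) : ℝ :=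
  (∑ y ∈ Finset.range (2 ^ b), nH (outP b μ y)) -
    ∫ u, ∑ y ∈ Finset.range (2 ^ b), nH (Wu b y u) ∂μ

/-- Rotation of the complex plane by the angle `2π/2^b`. -/
def rot (b : ℕ) : ℂ → ℂ := fun u => Complex.exp (((2 * π / 2 ^ b : ℝ) : ℂ) * Complex.I) * u


lemma rot_ne_zero (b : ℕ) {z : ℂ} (hz : z ≠ 0) : rot b z ≠ 0 := by
  unfold rot; exact mul_ne_zero (Complex.exp_ne_zero _) hz

lemma rot_mem_sector (b : ℕ) (hb : 1 ≤ b) {y : ℕ} (hy : y < 2 ^ b) (z : ℂ) :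
    rot b z ∈ sector b ((y + 1) % 2 ^ b) ↔ z ∈ sector b y := by
  by_cases hz : z = 0
  · simp [sector, hz, rot]
  · have hP0 : (0:ℝ) < 2^b := by positivity
    have hP2 : (2:ℝ) ≤ 2^b := by
      calc (2:ℝ) = 2^1 := (pow_one 2).symm
      _ ≤ 2^b := by exact pow_le_pow_right₀ one_le_two hb
    have hc0 : (0:ℝ) < 2*π/2^b := by positivity
    have hclt : 2*π/2^b < 2*π := by
      rw [div_lt_iff₀ hP0]; nlinarith [Real.pi_pos]
    have harg : arg2pi (rot b z) =
        if arg2pi z + 2*π/2^b < 2*π then arg2pi z + 2*π/2^b else arg2pi z + 2*π/2^b - 2*π :=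
      arg2pi_exp_mul (le_of_lt hc0) hclt hz
    have ha0 := arg2pi_nonneg z
    have ha2 := arg2pi_lt z
    have hrz := rot_ne_zero b hz
    set c := 2*π/2^b with hc
    have hrw : ∀ s : ℝ, 2*π*s/2^b = c*s := by intro s; rw [hc]; ring
    have hmul : c * 2^b = 2*π := by rw [hc]; field_simp
    have hmem : ∀ (k : ℕ) (w : ℂ),
        w ∈ sector b k ↔ (w ≠ 0 ∧ c*(k:ℝ) ≤ arg2pi w ∧ arg2pi w < c*((k:ℝ)+1)) := by
      intro k w
      simp only [sector, Set.mem_setOf_eq, ← hrw]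
    have hyP : (y:ℝ) + 1 ≤ 2^b := by
      have h := hy
      calc (y:ℝ) + 1 = ((y+1 : ℕ) : ℝ) := by push_cast; ring
      _ ≤ ((2^b : ℕ) : ℝ) := by exact_mod_cast h
      _ = 2^b := by push_cast; ring
    rw [hmem, hmem]
    rcases Nat.lt_or_ge (y+1) (2^b) with hcase | hcase
    · rw [Nat.mod_eq_of_lt hcase]
      have hyP2 : (y:ℝ) + 2 ≤ 2^b := by
        have h : (y+2 : ℕ) ≤ 2^b := hcase
        calc (y:ℝ) + 2 = ((y+2 : ℕ) : ℝ) := by push_cast; ring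
        _ ≤ ((2^b : ℕ) : ℝ) := by exact_mod_cast h
        _ = 2^b := by push_cast; ring
      have hA : c*((y:ℝ)+2) ≤ c*(2^b) := mul_le_mul_of_nonneg_left hyP2 hc0.le
      constructor
      · rintro ⟨-, h2, h3⟩
        push_cast at h2 h3
        by_cases hif : arg2pi z + c < 2*π
        · rw [harg, if_pos hif] at h2 h3
          exact ⟨hz, by nlinarith, by nlinarith⟩
        · rw [harg, if_neg hif] at h2 h3
          push_neg at hif
          exfalso
          have hB : c*1 ≤ c*((y:ℝ)+1) :=
            mul_le_mul_of_nonneg_left (by push_cast; linarith [Nat.cast_nonneg (α := ℝ) y]) hc0.le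
          nlinarith
      · rintro ⟨-, h2, h3⟩
        have hif : arg2pi z + c < 2*π := by nlinarith
        rw [harg, if_pos hif]
        refine ⟨hrz, ?_, ?_⟩ <;> push_cast <;> nlinarith
    · have hcase' : y + 1 = 2^b := le_antisymm hy hcase
      rw [hcase', Nat.mod_self]
      have hyR : (y:ℝ) = 2^b - 1 := by
        have h : ((y+1 : ℕ):ℝ) = ((2^b : ℕ):ℝ) := by rw [hcase']
        push_cast at h; linarith
      have hcy : c * (y:ℝ) = 2*π - c := by rw [hyR]; nlinarith [hmul]
      constructor
      · rintro ⟨-, h2, h3⟩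
        push_cast at h2 h3
        by_cases hif : arg2pi z + c < 2*π
        · rw [harg, if_pos hif] at h3; exfalso; nlinarith
        · rw [harg, if_neg hif] at h2 h3
          push_neg at hif
          exact ⟨hz, by nlinarith, by nlinarith⟩
      · rintro ⟨-, h2, h3⟩
        have hif : ¬ (arg2pi z + c < 2*π) := by push_neg; nlinarith
        rw [harg, if_neg hif]
        push_neg at hif
        refine ⟨hrz, ?_, ?_⟩
        · rw [Nat.cast_zero, mul_zero]
          linarith
        · rw [Nat.cast_zero, zero_add, mul_one]
          linarith

/-- A measure on `ℂ` is `2π/2^b`-symmetric if it is invariant under rotation by `2π/2^b`. -/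
def RotSymm (b : ℕ) (μ : Measure ℂ) : Prop := Measure.map (rot b) μ = μ


/-- The `2π/2^b`-symmetrization of a measure `μ` on `ℂ`: the average of the pushforwards
of `μ` under rotation by `2πi/2^b`, `i = 0, …, 2^b - 1`. -/
def symmetrize (b : ℕ) (μ : Measure ℂ) : Measure ℂ :=
  (2 ^ b : ENNReal)⁻¹ • ∑ i ∈ Finset.range (2 ^ b),
    Measure.map (fun u => Complex.exp (((2 * π * i / 2 ^ b : ℝ) : ℂ) * Complex.I) * u) μ


lemma measurable_arg2pi : Measurable arg2pi := by
  unfold arg2pi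
  exact Measurable.ite (measurableSet_le measurable_const Complex.measurable_arg)
    Complex.measurable_arg (Complex.measurable_arg.add_const _)

lemma measurableSet_sector (b y : ℕ) : MeasurableSet (sector b y) := by
  have : sector b y = {z : ℂ | z ≠ 0} ∩ (arg2pi ⁻¹' (Set.Ici (2*π*y/2^b)) ∩
      arg2pi ⁻¹' (Set.Iio (2*π*(y+1)/2^b))) := by
    ext z
    simp [sector, Set.mem_setOf_eq, and_assoc]
  rw [this]
  refine MeasurableSet.inter ?_ ((measurable_arg2pi measurableSet_Ici).inter
    (measurable_arg2pi measurableSet_Iio))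
  exact (measurableSet_singleton (0:ℂ)).compl

lemma Wu_eq (b y : ℕ) (u : ℂ) :
    Wu b y u = ∫ z in sector b y, (1/π) * Real.exp (-(‖z - u‖ ^ 2)) := by
  unfold Wu W
  rw [show ((Real.sqrt (‖u‖ ^ 2) : ℝ) : ℂ) * Complex.exp ((arg2pi u : ℂ) * Complex.I) = u by
    rw [Real.sqrt_sq (norm_nonneg u)]; exact abs_mul_exp_arg2pi u]

lemma rot_eq_rotation (b : ℕ) : rot b = ⇑(rotation (Circle.exp (2*π/2^b))) := by
  funext z; simp [rot, rotation_apply, Circle.coe_exp]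

lemma measurePreserving_rot (b : ℕ) : MeasurePreserving (rot b) volume volume := by
  rw [rot_eq_rotation]
  exact (rotation (Circle.exp (2*π/2^b))).measurePreserving

lemma measurable_rot (b : ℕ) : Measurable (rot b) := measurable_id.const_mul _

lemma Wu_rot (b : ℕ) (hb : 1 ≤ b) {y : ℕ} (hy : y < 2 ^ b) (u : ℂ) :
    Wu b ((y + 1) % 2 ^ b) (rot b u) = Wu b y u := by
  rw [Wu_eq, Wu_eq]
  have mp := measurePreserving_rot b
  have hS := measurableSet_sector b ((y+1) % 2^b)
  have hcont : Continuous fun z : ℂ => (1/π) * Real.exp (-(‖z - rot b u‖ ^ 2)) :=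
    continuous_const.mul (Real.continuous_exp.comp
      (((continuous_norm.comp (continuous_id.sub continuous_const)).pow 2).neg))
  have habs : ∀ w, ‖rot b w - rot b u‖ = ‖w - u‖ := by
    intro w; unfold rot
    rw [← mul_sub, norm_mul, Complex.norm_exp_ofReal_mul_I, one_mul]
  calc ∫ z in sector b ((y+1)%2^b), (1/π) * Real.exp (-(‖z - rot b u‖ ^ 2))
      = ∫ z in sector b ((y+1)%2^b), (1/π) * Real.exp (-(‖z - rot b u‖ ^ 2))
        ∂(Measure.map (rot b) volume) := by rw [mp.map_eq]
    _ = ∫ w in (rot b) ⁻¹' (sector b ((y+1)%2^b)),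
          (1/π) * Real.exp (-(‖rot b w - rot b u‖ ^ 2)) := by
        rw [setIntegral_map hS (by rw [mp.map_eq]; exact hcont.aestronglyMeasurable)
          (measurable_rot b).aemeasurable]
    _ = ∫ w in sector b y, (1/π) * Real.exp (-(‖w - u‖ ^ 2)) := by
        rw [show (rot b) ⁻¹' (sector b ((y+1)%2^b)) = sector b y from
          Set.ext fun z => rot_mem_sector b hb hy z]
        simp only [habs]

lemma gauss_integrable : Integrable (fun z : ℂ => Real.exp (-(‖z‖ ^ 2))) volume := by
  have mp := Complex.volume_preserving_equiv_real_prod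
  have hg : Integrable (fun p : ℝ × ℝ => Real.exp (-1*p.1^2) * Real.exp (-1*p.2^2))
      (volume : Measure (ℝ × ℝ)) := by
    rw [Measure.volume_eq_prod]
    exact Integrable.mul_prod (integrable_exp_neg_mul_sq one_pos) (integrable_exp_neg_mul_sq one_pos)
  have h := (mp.integrable_comp hg.aestronglyMeasurable).mpr hg
  refine h.congr (Filter.Eventually.of_forall fun z => ?_)
  simp only [Function.comp, Complex.measurableEquivRealProd_apply]
  rw [← Real.exp_add, Complex.sq_norm, Complex.normSq_apply]
  ring_nf

lemma gaussu_integrable (u : ℂ) :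
    Integrable (fun z : ℂ => (1/π) * Real.exp (-(‖z - u‖ ^ 2))) volume :=
  (gauss_integrable.comp_sub_right u).const_mul _

lemma Wu_nonneg (b y : ℕ) (u : ℂ) : 0 ≤ Wu b y u := by
  rw [Wu_eq]
  apply setIntegral_nonneg (measurableSet_sector b y)
  intro z _; positivity

/-- A uniform bound for the transition probabilities. -/
def Mconst : ℝ := ∫ z : ℂ, (1/π) * Real.exp (-(‖z‖ ^ 2))

lemma Wu_le (b y : ℕ) (u : ℂ) : Wu b y u ≤ Mconst := by
  rw [Wu_eq]
  calc ∫ z in sector b y, (1/π) * Real.exp (-(‖z - u‖ ^ 2))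
      ≤ ∫ z : ℂ, (1/π) * Real.exp (-(‖z - u‖ ^ 2)) :=
        setIntegral_le_integral (gaussu_integrable u) (Filter.Eventually.of_forall fun z => by positivity)
    _ = Mconst := integral_sub_right_eq_self (fun z => (1/π) * Real.exp (-(‖z‖ ^ 2))) u

lemma measurable_Wu (b y : ℕ) : Measurable fun u => Wu b y u := by
  have h1 : StronglyMeasurable (Function.uncurry fun (u z : ℂ) =>
      Set.indicator (sector b y) (fun z => (1/π) * Real.exp (-(‖z - u‖ ^ 2))) z) := by
    apply Measurable.stronglyMeasurable
    have heq : (Function.uncurry fun (u z : ℂ) =>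
        Set.indicator (sector b y) (fun z => (1/π) * Real.exp (-(‖z - u‖ ^ 2))) z)
        = fun p : ℂ × ℂ => Set.indicator (Prod.snd ⁻¹' sector b y)
            (fun p : ℂ × ℂ => (1/π) * Real.exp (-(‖p.2 - p.1‖ ^ 2))) p := by
      funext p
      rfl
    rw [heq]
    have hm : Measurable fun p : ℂ × ℂ => (1/π) * Real.exp (-(‖p.2 - p.1‖ ^ 2)) :=
      measurable_const.mul (Real.measurable_exp.comp
        (((continuous_norm.measurable.comp (measurable_snd.sub measurable_fst)).pow_const 2).neg))
    exact Measurable.indicator hm (measurable_snd (measurableSet_sector b y))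
  have h2 := StronglyMeasurable.integral_prod_right (ν := (volume : Measure ℂ)) h1
  have h3 : (fun u => Wu b y u) = fun u => ∫ z,
      Set.indicator (sector b y) (fun z => (1/π) * Real.exp (-(‖z - u‖ ^ 2))) z := by
    funext u
    rw [Wu_eq, ← integral_indicator (measurableSet_sector b y)]
  rw [h3]
  exact h2.measurable


/-- Transition probability with integer index, directly as a function of the input. -/
def Wzu (b : ℕ) (y : ℤ) (u : ℂ) : ℝ := Wu b ((y % (2 ^ b : ℤ)).toNat) u

lemma Wzu_natCast (b : ℕ) {y : ℕ} (hy : y < 2 ^ b) (u : ℂ) : Wzu b y u = Wu b y u := by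
  unfold Wzu
  congr 1
  rw [Int.emod_eq_of_lt (by positivity) (by exact_mod_cast hy)]
  exact Int.toNat_natCast y

lemma Wzu_add_one (b : ℕ) (hb : 1 ≤ b) (y : ℤ) (u : ℂ) :
    Wzu b (y + 1) (rot b u) = Wzu b y u := by
  have hNpos : (0:ℤ) < 2^b := by positivity
  have hcast : ((2^b : ℕ) : ℤ) = 2^b := by push_cast; ring
  set m : ℕ := (y % (2^b : ℤ)).toNat with hm
  have hm1 : (m : ℤ) = y % 2^b := Int.toNat_of_nonneg (Int.emod_nonneg y (ne_of_gt hNpos))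
  have hlt := Int.emod_lt_of_pos y hNpos
  have h2b : (2:ℤ) ≤ 2^b := by
    calc (2:ℤ) = 2^1 := (pow_one 2).symm
    _ ≤ 2^b := pow_le_pow_right₀ one_le_two hb
  have hmlt : m < 2^b := by
    have : (m:ℤ) < ((2^b : ℕ) : ℤ) := by rw [hm1, hcast]; exact hlt
    exact_mod_cast this
  have hkey : ((y+1) % (2^b:ℤ)).toNat = (m+1) % 2^b := by
    rw [Int.add_emod, ← hm1, Int.emod_eq_of_lt (by norm_num) (by linarith : (1:ℤ) < 2^b)]
    rw [show ((m:ℤ) + 1) = ((m+1 : ℕ) : ℤ) by push_cast; ring, ← hcast, ← Int.natCast_mod]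
    exact Int.toNat_natCast _
  unfold Wzu
  rw [hkey, ← hm]
  exact Wu_rot b hb hmlt u

lemma Wzu_iterate (b : ℕ) (hb : 1 ≤ b) (i : ℕ) (y : ℤ) (u : ℂ) :
    Wzu b (y + i) ((rot b)^[i] u) = Wzu b y u := by
  induction i with
  | zero => simp
  | succ i ih =>
    rw [Function.iterate_succ_apply', show (y + (i+1 : ℕ) : ℤ) = (y + i) + 1 by push_cast; ring,
      Wzu_add_one b hb (y + i) ((rot b)^[i] u), ih]

lemma toNat_shift {N : ℕ} (hN : 0 < N) (i : ℤ) {a : ℕ} (ha : a < N) :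
    ((((((a:ℤ) + i) % (N:ℤ)).toNat : ℤ) - i) % (N:ℤ)).toNat = a := by
  have hN0 : (0:ℤ) < (N:ℤ) := by exact_mod_cast hN
  have h0 : (0:ℤ) ≤ ((a:ℤ) + i) % N := Int.emod_nonneg _ hN0.ne'
  rw [Int.toNat_of_nonneg h0]
  have h1 : (((a:ℤ)+i) % N - i) % N = ((a:ℤ)+i-i) % N := by
    rw [Int.sub_emod, Int.emod_emod_of_dvd _ dvd_rfl, ← Int.sub_emod]
  rw [h1, add_sub_cancel_right, Int.emod_eq_of_lt (by positivity) (by exact_mod_cast ha)]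
  exact Int.toNat_natCast a

lemma sum_shift (N : ℕ) (i : ℤ) (f : ℕ → ℝ) :
    ∑ y ∈ Finset.range N, f ((((y:ℤ) + i) % (N:ℤ)).toNat) = ∑ y ∈ Finset.range N, f y := by
  rcases Nat.eq_zero_or_pos N with h | h
  · simp [h]
  have hN0 : (0:ℤ) < (N:ℤ) := by exact_mod_cast h
  have hmem : ∀ j : ℤ, (j % (N:ℤ)).toNat ∈ Finset.range N := by
    intro j
    have h0 : (0:ℤ) ≤ j % N := Int.emod_nonneg _ hN0.ne'
    have h1 : j % (N:ℤ) < N := Int.emod_lt_of_pos _ hN0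
    simp only [Finset.mem_range]
    omega
  refine Finset.sum_nbij' (i := fun y => (((y:ℤ) + i) % (N:ℤ)).toNat)
    (j := fun y => (((y:ℤ) - i) % (N:ℤ)).toNat) ?_ ?_ ?_ ?_ ?_
  all_goals intro a ha
  · exact hmem _
  · exact hmem _
  · simp only [Finset.mem_range] at ha
    exact toNat_shift h i ha
  · simp only [Finset.mem_range] at ha
    have := toNat_shift h (-i) ha
    simpa [sub_eq_add_neg] using this
  · rfl

lemma nH_eq (x : ℝ) : nH x = Real.negMulLog x / Real.log 2 := by
  simp only [nH, Real.negMulLog, Real.logb]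
  ring

lemma continuous_nH : Continuous nH := by
  have h : nH = fun x => Real.negMulLog x / Real.log 2 := funext nH_eq
  rw [h]
  exact Real.continuous_negMulLog.div_const _

lemma concaveOn_nH : ConcaveOn ℝ (Set.Ici 0) nH := by
  have h2 : (0:ℝ) ≤ (Real.log 2)⁻¹ := inv_nonneg.mpr (Real.log_nonneg one_le_two)
  have h : nH = (Real.log 2)⁻¹ • Real.negMulLog := by
    funext x
    simp only [nH_eq, Pi.smul_apply, smul_eq_mul]
    ring
  rw [h]
  exact (Real.strictConcaveOn_negMulLog.concaveOn).smul h2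

lemma nH_avg_le {N : ℕ} (hN : 0 < N) (x : ℕ → ℝ) (hx : ∀ i ∈ Finset.range N, 0 ≤ x i) :
    ∑ i ∈ Finset.range N, (N:ℝ)⁻¹ * nH (x i) ≤ nH (∑ i ∈ Finset.range N, (N:ℝ)⁻¹ * x i) := by
  have hw : ∀ i ∈ Finset.range N, (0:ℝ) ≤ (N:ℝ)⁻¹ := fun _ _ => by positivity
  have hN0 : (N:ℝ) ≠ 0 := Nat.cast_ne_zero.mpr hN.ne'
  have hsum : ∑ _i ∈ Finset.range N, (N:ℝ)⁻¹ = 1 := by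
    rw [Finset.sum_const, Finset.card_range, nsmul_eq_mul]
    field_simp
  have h := concaveOn_nH.le_map_sum hw hsum hx
  simpa [smul_eq_mul] using h

lemma integrable_of_bounded {ν : Measure ℂ} [IsFiniteMeasure ν] {f : ℂ → ℝ} (hf : Measurable f)
    {C : ℝ} (h : ∀ u, ‖f u‖ ≤ C) : Integrable f ν :=
  Integrable.mono' (integrable_const C) hf.aestronglyMeasurable (Filter.Eventually.of_forall h)


lemma mulRot_eq_iterate (b : ℕ) (i : ℕ) :
    (fun u : ℂ => Complex.exp (((2 * π * i / 2 ^ b : ℝ) : ℂ) * Complex.I) * u) = (rot b)^[i] := by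
  induction i with
  | zero => funext u; simp
  | succ i ih =>
    funext u
    rw [Function.iterate_succ_apply', ← ih]
    show Complex.exp (((2 * π * (i+1 : ℕ) / 2 ^ b : ℝ) : ℂ) * Complex.I) * u
      = rot b (Complex.exp (((2 * π * i / 2 ^ b : ℝ) : ℂ) * Complex.I) * u)
    unfold rot
    rw [← mul_assoc, ← Complex.exp_add, ← add_mul, ← Complex.ofReal_add,
      show (2*π/2^b + 2*π*(i:ℝ)/2^b) = 2*π*((i+1:ℕ):ℝ)/2^b by push_cast; ring]

lemma measurable_rot_iterate (b : ℕ) (i : ℕ) : Measurable ((rot b)^[i]) := by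
  rw [← mulRot_eq_iterate]
  exact measurable_id.const_mul _

lemma rot_iterate_pow (b : ℕ) : (rot b)^[2^b] = id := by
  rw [← mulRot_eq_iterate]
  funext u
  have h2b : ((2:ℝ))^b ≠ 0 := by positivity
  rw [show (2 * π * ((2^b : ℕ):ℝ) / 2 ^ b : ℝ) = 2*π by push_cast; field_simp]
  rw [show (((2*π : ℝ)):ℂ) * Complex.I = 2 * (π:ℂ) * Complex.I by push_cast; ring,
    Complex.exp_two_pi_mul_I, one_mul]
  rfl

lemma rotSymm_symmetrize (b : ℕ) (μ : Measure ℂ) : RotSymm b (symmetrize b μ) := by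
  unfold RotSymm symmetrize
  simp only [mulRot_eq_iterate]
  have hstep1 : Measure.map (rot b)
      ((2^b : ENNReal)⁻¹ • ∑ i ∈ Finset.range (2^b), Measure.map ((rot b)^[i]) μ)
      = (2^b : ENNReal)⁻¹ • ∑ i ∈ Finset.range (2^b), Measure.map ((rot b)^[i+1]) μ := by
    ext s hs
    rw [Measure.map_apply (measurable_rot b) hs, Measure.smul_apply, Measure.smul_apply,
      Measure.finset_sum_apply, Measure.finset_sum_apply]
    congr 1
    apply Finset.sum_congr rfl
    intro i _
    rw [Measure.map_apply (measurable_rot_iterate b i) ((measurable_rot b) hs),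
      Measure.map_apply (measurable_rot_iterate b (i+1)) hs,
      Function.iterate_succ', Set.preimage_comp]
  rw [hstep1]
  congr 1
  have hpos : 0 < 2^b := Nat.pow_pos (by norm_num)
  have hN : 2^b = (2^b - 1) + 1 := by omega
  have hlast : Measure.map ((rot b)^[(2^b-1)+1]) μ = Measure.map ((rot b)^[0]) μ := by
    rw [← hN, rot_iterate_pow]
    simp [Measure.map_id]
  calc ∑ i ∈ Finset.range (2^b), Measure.map ((rot b)^[i+1]) μ
      = ∑ i ∈ Finset.range ((2^b-1)+1), Measure.map ((rot b)^[i+1]) μ := by rw [← hN]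
    _ = (∑ i ∈ Finset.range (2^b-1), Measure.map ((rot b)^[i+1]) μ)
        + Measure.map ((rot b)^[(2^b-1)+1]) μ := Finset.sum_range_succ _ _
    _ = (∑ i ∈ Finset.range (2^b-1), Measure.map ((rot b)^[i+1]) μ)
        + Measure.map ((rot b)^[0]) μ := by rw [hlast]
    _ = ∑ i ∈ Finset.range ((2^b-1)+1), Measure.map ((rot b)^[i]) μ := by
        rw [Finset.sum_range_succ' (fun i => Measure.map ((rot b)^[i]) μ) (2^b-1)]
    _ = ∑ i ∈ Finset.range (2^b), Measure.map ((rot b)^[i]) μ := by rw [← hN]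

/-- Index shift modulo `2^b`. -/
def shiftIdx (b : ℕ) (i : ℤ) (y : ℕ) : ℕ := (((y:ℤ) + i) % ((2^b : ℕ) : ℤ)).toNat

lemma Wu_iterate (b : ℕ) (hb : 1 ≤ b) (i : ℕ) {y : ℕ} (hy : y < 2^b) (u : ℂ) :
    Wu b y ((rot b)^[i] u) = Wu b (shiftIdx b (-(i:ℤ)) y) u := by
  have hcast : ((2^b : ℕ) : ℤ) = (2:ℤ)^b := by push_cast; ring
  have h := Wzu_iterate b hb i ((y:ℤ) - i) u
  rw [show ((y:ℤ) - i + i) = (y:ℤ) by ring] at h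
  rw [Wzu_natCast b hy ((rot b)^[i] u)] at h
  rw [h]
  unfold Wzu shiftIdx
  congr 2

lemma sum_shiftIdx (b : ℕ) (i : ℤ) (f : ℕ → ℝ) :
    ∑ y ∈ Finset.range (2^b), f (shiftIdx b i y) = ∑ y ∈ Finset.range (2^b), f y :=
  sum_shift (2^b) i f

/-- The conditional output entropy as a function of the channel input. -/
def hEntU (b : ℕ) (u : ℂ) : ℝ := ∑ y ∈ Finset.range (2^b), nH (Wu b y u)

lemma measurable_hEntU (b : ℕ) : Measurable (hEntU b) :=
  Finset.measurable_sum _ (fun y _ => continuous_nH.measurable.comp (measurable_Wu b y))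

lemma hEntU_rot (b : ℕ) (hb : 1 ≤ b) (i : ℕ) (u : ℂ) :
    hEntU b ((rot b)^[i] u) = hEntU b u := by
  unfold hEntU
  rw [Finset.sum_congr rfl (fun y hy => by
    rw [Wu_iterate b hb i (Finset.mem_range.mp hy) u])]
  exact sum_shiftIdx b (-(i:ℤ)) (fun k => nH (Wu b k u))

lemma Wu_integrable (b y : ℕ) (ν : Measure ℂ) [IsFiniteMeasure ν] :
    Integrable (fun u => Wu b y u) ν :=
  integrable_of_bounded (measurable_Wu b y) (C := Mconst) (fun u => by
    rw [Real.norm_eq_abs, abs_of_nonneg (Wu_nonneg b y u)]; exact Wu_le b y u)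

lemma nHWu_integrable (b y : ℕ) (ν : Measure ℂ) [IsFiniteMeasure ν] :
    Integrable (fun u => nH (Wu b y u)) ν := by
  obtain ⟨K, hK⟩ := (isCompact_Icc (a := (0:ℝ)) (b := Mconst)).exists_bound_of_continuousOn
    continuous_nH.continuousOn
  exact integrable_of_bounded (continuous_nH.measurable.comp (measurable_Wu b y))
    (fun u => hK _ ⟨Wu_nonneg b y u, Wu_le b y u⟩)

lemma hEntU_integrable (b : ℕ) (ν : Measure ℂ) [IsFiniteMeasure ν] :
    Integrable (hEntU b) ν :=
  integrable_finset_sum _ (fun y _ => nHWu_integrable b y ν)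

lemma outP_nonneg (b : ℕ) (ν : Measure ℂ) (y : ℕ) : 0 ≤ outP b ν y :=
  integral_nonneg (fun u => Wu_nonneg b y u)

lemma outP_map (b : ℕ) (hb : 1 ≤ b) (μ : Measure ℂ) (i : ℕ) {y : ℕ} (hy : y < 2^b) :
    outP b (Measure.map ((rot b)^[i]) μ) y = outP b μ (shiftIdx b (-(i:ℤ)) y) := by
  unfold outP
  rw [integral_map (measurable_rot_iterate b i).aemeasurable
    (measurable_Wu b y).aestronglyMeasurable]
  simp only [Wu_iterate b hb i hy]


lemma symmetrize_eq (b : ℕ) (μ : Measure ℂ) :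
    symmetrize b μ
      = (2^b : ENNReal)⁻¹ • ∑ i ∈ Finset.range (2^b), Measure.map ((rot b)^[i]) μ := by
  unfold symmetrize
  simp only [mulRot_eq_iterate]

lemma toReal_inv_pow (b : ℕ) : ((2^b : ENNReal)⁻¹).toReal = (((2^b : ℕ) : ℝ))⁻¹ := by
  rw [ENNReal.toReal_inv]; push_cast; norm_num

lemma mutInfo_le_symmetrize (b : ℕ) (hb : 1 ≤ b) (μ : Measure ℂ) [IsProbabilityMeasure μ] :
    mutInfo b μ ≤ mutInfo b (symmetrize b μ) := by
  classical
  have hpos : 0 < 2^b := Nat.pow_pos (by norm_num)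
  have hprob : ∀ i : ℕ, IsProbabilityMeasure (Measure.map ((rot b)^[i]) μ) :=
    fun i => Measure.isProbabilityMeasure_map (measurable_rot_iterate b i).aemeasurable
  have hc1 : ∑ _i ∈ Finset.range (2^b), (((2^b : ℕ) : ℝ))⁻¹ = 1 := by
    rw [Finset.sum_const, Finset.card_range, nsmul_eq_mul]
    have : ((2^b : ℕ) : ℝ) ≠ 0 := by positivity
    field_simp
  -- output distribution of the symmetrization
  have houtP : ∀ y, outP b (symmetrize b μ) y
      = ∑ i ∈ Finset.range (2^b), (((2^b : ℕ) : ℝ))⁻¹ * outP b (Measure.map ((rot b)^[i]) μ) y := by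
    intro y
    rw [symmetrize_eq]
    unfold outP
    rw [integral_smul_measure,
      integral_finset_sum_measure (fun i _ => Wu_integrable b y (Measure.map ((rot b)^[i]) μ)),
      toReal_inv_pow, smul_eq_mul, Finset.mul_sum]
  -- entropy term comparison via concavity
  have hsum1 : ∑ y ∈ Finset.range (2^b), nH (outP b μ y)
      ≤ ∑ y ∈ Finset.range (2^b), nH (outP b (symmetrize b μ) y) := by
    calc ∑ y ∈ Finset.range (2^b), nH (outP b μ y)
        = ∑ _i ∈ Finset.range (2^b), (((2^b : ℕ) : ℝ))⁻¹ * ∑ y ∈ Finset.range (2^b), nH (outP b μ y) := by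
          rw [← Finset.sum_mul, hc1, one_mul]
      _ = ∑ i ∈ Finset.range (2^b), (((2^b : ℕ) : ℝ))⁻¹
            * ∑ y ∈ Finset.range (2^b), nH (outP b (Measure.map ((rot b)^[i]) μ) y) := by
          apply Finset.sum_congr rfl
          intro i _
          congr 1
          symm
          rw [Finset.sum_congr rfl (fun y hy => by
            rw [outP_map b hb μ i (Finset.mem_range.mp hy)])]
          exact sum_shiftIdx b (-(i:ℤ)) (fun k => nH (outP b μ k))
      _ = ∑ y ∈ Finset.range (2^b), ∑ i ∈ Finset.range (2^b),
            (((2^b : ℕ) : ℝ))⁻¹ * nH (outP b (Measure.map ((rot b)^[i]) μ) y) := by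
          simp only [Finset.mul_sum]
          exact Finset.sum_comm
      _ ≤ ∑ y ∈ Finset.range (2^b), nH (outP b (symmetrize b μ) y) := by
          apply Finset.sum_le_sum
          intro y _
          rw [houtP y]
          exact nH_avg_le hpos (fun i => outP b (Measure.map ((rot b)^[i]) μ) y)
            (fun i _ => outP_nonneg b _ y)
  -- the conditional entropy term is unchanged
  have hInt : ∫ u, hEntU b u ∂(symmetrize b μ) = ∫ u, hEntU b u ∂μ := by
    rw [symmetrize_eq, integral_smul_measure,
      integral_finset_sum_measure (fun i _ => hEntU_integrable b (Measure.map ((rot b)^[i]) μ))]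
    have hterm : ∀ i ∈ Finset.range (2^b),
        ∫ u, hEntU b u ∂(Measure.map ((rot b)^[i]) μ) = ∫ u, hEntU b u ∂μ := by
      intro i _
      rw [integral_map (measurable_rot_iterate b i).aemeasurable
        (measurable_hEntU b).aestronglyMeasurable]
      simp only [hEntU_rot b hb i]
    rw [Finset.sum_congr rfl hterm, Finset.sum_const, Finset.card_range, toReal_inv_pow,
      nsmul_eq_mul, smul_eq_mul, ← mul_assoc, inv_mul_cancel₀ (by positivity), one_mul]
  unfold mutInfo
  have hfun : ∀ ν : Measure ℂ, (∫ u, ∑ y ∈ Finset.range (2 ^ b), nH (Wu b y u) ∂ν)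
      = ∫ u, hEntU b u ∂ν := fun ν => rfl
  rw [hfun, hfun, hInt]
  linarith [hsum1]

/-- the symmetrization is `2π/2^b`-symmetric and does not decrease
the mutual information. -/
theorem stmt_3 (b : ℕ) (hb : 1 ≤ b) (μ : Measure ℂ) [IsProbabilityMeasure μ] :
    RotSymm b (symmetrize b μ) ∧ mutInfo b μ ≤ mutInfo b (symmetrize b μ) := by
  exact ⟨rotSymm_symmetrize b μ, mutInfo_le_symmetrize b hb μ⟩

end
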